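/- arXiv:1304.0693 — 3 statements merged into one kernel-verified Lean document; each statement's English description precedes it below -/
import Mathlib

section
/- Let ℓ be an odd positive integer with 3^s exactly dividing ℓ. Then for every positive integer k, ∑_{d | 3k+2} (d/3) d^{2ℓ} ≡ 0 (mod 3^{s+1}). -/
/-- The Legendre symbol modulo 3. -/
def leg3 (d : ℕ) : ℤ := if d % 3 = 1 then 1 else if d % 3 = 2 then -1 else 0

lemma sum_leg3_eq_zero (k : ℕ) :
    ∑ d ∈ (3 * k + 2).divisors, leg3 d = 0 := by
  set n := 3 * k + 2 with hn
  have hn0 : n ≠ 0 := by omega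
  refine Finset.sum_involution (fun d _ => n / d) ?_ ?_ ?_ ?_
  · intro d hd
    show leg3 d + leg3 (n / d) = 0
    obtain ⟨hdvd, -⟩ := Nat.mem_divisors.mp hd
    obtain ⟨e, he⟩ := hdvd
    have hd0 : d ≠ 0 := by rintro rfl; omega
    have hediv : n / d = e := by
      rw [he]; exact Nat.mul_div_cancel_left e (Nat.pos_of_ne_zero hd0)
    rw [hediv]
    have hmod : (d % 3) * (e % 3) % 3 = 2 := by
      have h := Nat.mul_mod d e 3
      rw [← he] at h; omega
    have hd3 : d % 3 < 3 := Nat.mod_lt _ (by norm_num)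
    have he3 : e % 3 < 3 := Nat.mod_lt _ (by norm_num)
    unfold leg3
    interval_cases h1 : d % 3 <;> simp_all <;> omega
  · intro d hd hne
    obtain ⟨hdvd, -⟩ := Nat.mem_divisors.mp hd
    intro heq
    replace heq : n / d = d := heq
    have hdd : d * d = n := by
      conv_rhs => rw [← Nat.mul_div_cancel' hdvd, heq]
    have hmod : (d % 3) * (d % 3) % 3 = 2 := by
      have h := Nat.mul_mod d d 3
      rw [hdd] at h; omega
    have hd3 : d % 3 < 3 := Nat.mod_lt _ (by norm_num)
    interval_cases h1 : d % 3 <;> omega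
  · intro d hd
    obtain ⟨hdvd, -⟩ := Nat.mem_divisors.mp hd
    exact Nat.mem_divisors.mpr ⟨⟨d, (Nat.div_mul_cancel hdvd).symm⟩, hn0⟩
  · intro d hd
    exact Nat.div_div_self (Nat.mem_divisors.mp hd).1 hn0

/-- If `ℓ` is odd with `3^s ∥ ℓ`, then `∑_{d ∣ 3k+2} (d/3) d^{2ℓ} ≡ 0 (mod 3^{s+1})`. -/
theorem stmt6 (ℓ s : ℕ) (hℓ : Odd ℓ) (hℓ0 : 0 < ℓ)
    (h1 : 3 ^ s ∣ ℓ) (h2 : ¬ 3 ^ (s + 1) ∣ ℓ) (k : ℕ) (hk : 0 < k) :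
    (3 ^ (s + 1) : ℤ) ∣ ∑ d ∈ (3 * k + 2).divisors, leg3 d * (d : ℤ) ^ (2 * ℓ) := by
  obtain ⟨u, hu⟩ := h1
  set n := 3 * k + 2 with hn
  set m := 3 ^ (s + 1) with hm
  have hm1 : 1 < m := Nat.one_lt_pow (Nat.succ_ne_zero s) (by norm_num)
  have key : ∀ d ∈ n.divisors, (m : ℤ) ∣ leg3 d * (d : ℤ) ^ (2 * ℓ) - leg3 d := by
    intro d hd
    obtain ⟨hdvd, -⟩ := Nat.mem_divisors.mp hd
    have hd0 : 0 < d := Nat.pos_of_mem_divisors hd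
    have h3d : ¬ (3 ∣ d) := by
      intro h
      have := h.trans hdvd
      omega
    have hcop3 : Nat.Coprime d 3 :=
      Nat.coprime_comm.mp ((Nat.coprime_or_dvd_of_prime Nat.prime_three d).resolve_right h3d)
    have hcop : Nat.Coprime d m := hcop3.pow_right (s + 1)
    have htot : Nat.totient m = 3 ^ s * 2 := by
      rw [hm, Nat.totient_prime_pow Nat.prime_three (Nat.succ_pos s)]
      simp
    have ht : d ^ Nat.totient m ≡ 1 [MOD m] := Nat.ModEq.pow_totient hcop
    have h2l : 2 * ℓ = Nat.totient m * u := by rw [htot, hu]; ring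
    have hpow : d ^ (2 * ℓ) ≡ 1 [MOD m] := by
      have heq : d ^ (2 * ℓ) = (d ^ Nat.totient m) ^ u := by rw [← pow_mul, h2l]
      rw [heq]
      calc (d ^ Nat.totient m) ^ u ≡ 1 ^ u [MOD m] := ht.pow u
        _ = 1 := one_pow u
    have hle : 1 ≤ d ^ (2 * ℓ) := Nat.one_le_pow _ _ hd0
    have hnat : m ∣ d ^ (2 * ℓ) - 1 := (Nat.modEq_iff_dvd' hle).mp hpow.symm
    have hint : (m : ℤ) ∣ (d : ℤ) ^ (2 * ℓ) - 1 := by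
      have hc := Int.natCast_dvd_natCast.mpr hnat
      push_cast [hle] at hc ⊢
      exact hc
    have hfac : leg3 d * (d : ℤ) ^ (2 * ℓ) - leg3 d = leg3 d * ((d : ℤ) ^ (2 * ℓ) - 1) := by
      ring
    rw [hfac]
    exact hint.mul_left _
  have hdvd : (m : ℤ) ∣ ∑ d ∈ n.divisors, (leg3 d * (d : ℤ) ^ (2 * ℓ) - leg3 d) :=
    Finset.dvd_sum key
  rw [Finset.sum_sub_distrib, sum_leg3_eq_zero, sub_zero] at hdvd
  exact_mod_cast hdvd
end

section
/- Let ℓ be an odd positive integer with 3^s exactly dividing ℓ. Then for every positive integer k, ∑_{d | 3k+2} d^ℓ ≡ 0 (mod 3^{s+1}). -/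
lemma pow2l (s ℓ : ℕ) (h1 : 3 ^ s ∣ ℓ) (x : ℕ) (hx3 : ¬ 3 ∣ x) :
    (3:ℤ) ^ (s+1) ∣ ((x:ℤ) ^ ℓ - 1) * ((x:ℤ) ^ ℓ + 1) := by
  obtain ⟨m, hm⟩ := h1
  have hp3 : Nat.Prime 3 := by norm_num
  have hcop : Nat.Coprime x (3 ^ (s+1)) :=
    Nat.Coprime.pow_right _ (Nat.coprime_comm.mp ((Nat.Prime.coprime_iff_not_dvd hp3).mpr hx3))
  have heuler : x ^ (3 ^ (s+1)).totient ≡ 1 [MOD 3 ^ (s+1)] := Nat.ModEq.pow_totient hcop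
  rw [Nat.totient_prime_pow_succ hp3 s] at heuler
  have h2 := heuler.pow m
  rw [one_pow] at h2
  have hd := Nat.modEq_iff_dvd.mp h2
  push_cast at hd
  have hfac : ((x:ℤ) ^ ℓ - 1) * ((x:ℤ) ^ ℓ + 1) = -(1 - ((x:ℤ) ^ (3 ^ s * (3-1)))^m) := by
    rw [← pow_mul]
    have he : 3 ^ s * (3 - 1) * m = ℓ * 2 := by rw [hm]; ring
    rw [he, pow_mul]
    ring
  rw [hfac]
  exact dvd_neg.mpr hd

lemma keyA (s ℓ x : ℕ) (h1 : 3^s ∣ ℓ) (hx : x % 3 = 1) :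
    (3:ℤ)^(s+1) ∣ (x:ℤ)^ℓ - 1 := by
  have h := pow2l s ℓ h1 x (by omega)
  have hnd : ¬ (3:ℤ) ∣ (x:ℤ)^ℓ + 1 := by
    intro hc
    have hc' : (3:ℕ) ∣ x ^ ℓ + 1 := by exact_mod_cast hc
    have hm : x ^ ℓ % 3 = 1 := by
      have := Nat.pow_mod x ℓ 3
      rw [hx, one_pow] at this
      omega
    omega
  exact Int.prime_three.pow_dvd_of_dvd_mul_right _ hnd h

lemma keyB (s ℓ x : ℕ) (hℓ : Odd ℓ) (h1 : 3^s ∣ ℓ) (hx : x % 3 = 2) :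
    (3:ℤ)^(s+1) ∣ (x:ℤ)^ℓ + 1 := by
  have h := pow2l s ℓ h1 x (by omega)
  have hpm : x ^ ℓ % 3 = 2 := by
    obtain ⟨j, hj⟩ := hℓ
    have hp := Nat.pow_mod x ℓ 3
    rw [hx] at hp
    have h2l : (2:ℕ) ^ ℓ % 3 = 2 := by
      rw [hj, pow_succ, pow_mul, Nat.mul_mod, Nat.pow_mod]
      norm_num
    omega
  have hnd : ¬ (3:ℤ) ∣ (x:ℤ)^ℓ - 1 := by
    intro hc
    have hc2 : (3:ℤ) ∣ ((x ^ ℓ + 2 : ℕ) : ℤ) := by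
      push_cast
      have he : ((x:ℤ)^ℓ + 2) = ((x:ℤ)^ℓ - 1) + 3 := by ring
      rw [he]
      exact dvd_add hc (by norm_num)
    have hc' : (3:ℕ) ∣ x ^ ℓ + 2 := by exact_mod_cast hc2
    omega
  rw [mul_comm] at h
  exact Int.prime_three.pow_dvd_of_dvd_mul_right _ hnd h

/-- If `ℓ` is odd with `3^s ∥ ℓ`, then `∑_{d ∣ 3k+2} d^ℓ ≡ 0 (mod 3^{s+1})`. -/
theorem stmt8 (ℓ s : ℕ) (hℓ : Odd ℓ) (hℓ0 : 0 < ℓ)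
    (h1 : 3 ^ s ∣ ℓ) (h2 : ¬ 3 ^ (s + 1) ∣ ℓ) (k : ℕ) (hk : 0 < k) :
    3 ^ (s + 1) ∣ ∑ d ∈ (3 * k + 2).divisors, d ^ ℓ := by
  set n := 3 * k + 2 with hn
  have hn0 : 0 < n := by omega
  have h2S : (3:ℕ)^(s+1) ∣ 2 * ∑ d ∈ n.divisors, d ^ ℓ := by
    have hswap : ∑ d ∈ n.divisors, (n / d) ^ ℓ = ∑ d ∈ n.divisors, d ^ ℓ :=
      Nat.sum_div_divisors n (fun d => d^ℓ)
    have hdist : 2 * ∑ d ∈ n.divisors, d ^ ℓ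
        = ∑ d ∈ n.divisors, (d ^ ℓ + (n / d) ^ ℓ) := by
      rw [Finset.sum_add_distrib, hswap]; ring
    rw [hdist]
    apply Finset.dvd_sum
    intro d hd
    obtain ⟨hdvd, _⟩ := Nat.mem_divisors.mp hd
    have hdpos : 0 < d := Nat.pos_of_mem_divisors hd
    obtain ⟨e, he⟩ := hdvd
    have hnd : n / d = e := by rw [he]; exact Nat.mul_div_cancel_left e hdpos
    have hmod : (d * e) % 3 = 2 := by rw [← he]; omega
    have hde : d % 3 = 1 ∧ e % 3 = 2 ∨ d % 3 = 2 ∧ e % 3 = 1 := by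
      have hmm := Nat.mul_mod d e 3
      have hd3 : d % 3 < 3 := Nat.mod_lt _ (by norm_num)
      have he3 : e % 3 < 3 := Nat.mod_lt _ (by norm_num)
      interval_cases h : d % 3 <;> interval_cases h' : e % 3 <;> simp_all
    rw [hnd, ← Int.natCast_dvd_natCast]
    push_cast
    rcases hde with ⟨ha, hb⟩ | ⟨ha, hb⟩
    · have k1 := keyA s ℓ d h1 ha
      have k2 := keyB s ℓ e hℓ h1 hb
      have hr : (d:ℤ)^ℓ + (e:ℤ)^ℓ = ((d:ℤ)^ℓ - 1) + ((e:ℤ)^ℓ + 1) := by ring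
      rw [hr]; exact dvd_add k1 k2
    · have k1 := keyB s ℓ d hℓ h1 ha
      have k2 := keyA s ℓ e h1 hb
      have hr : (d:ℤ)^ℓ + (e:ℤ)^ℓ = ((d:ℤ)^ℓ + 1) + ((e:ℤ)^ℓ - 1) := by ring
      rw [hr]; exact dvd_add k1 k2
  exact (Nat.Coprime.pow_left _ (by norm_num)).dvd_of_dvd_mul_left h2S
end

section
/- The Borwein cubic theta functions satisfy a(q)^3 = b(q)^3 + c(q)^3 for |q|<1. -/
open Complex in
/-- Borwein's cubic theta function `a(q) = ∑ q^{n²+nm+m²}`. -/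
noncomputable def borA (q : ℂ) : ℂ :=
  ∑' p : ℤ × ℤ, q ^ (p.1 ^ 2 + p.1 * p.2 + p.2 ^ 2)

open Complex in
/-- Borwein's cubic theta function `b(q) = ∑ ω^{n-m} q^{n²+nm+m²}`, `ω = e^{2πi/3}`. -/
noncomputable def borB (q : ℂ) : ℂ :=
  ∑' p : ℤ × ℤ,
    Complex.exp (2 * Real.pi * Complex.I / 3) ^ (p.1 - p.2) *
      q ^ (p.1 ^ 2 + p.1 * p.2 + p.2 ^ 2)

open Complex in
/-- Borwein's cubic theta function `c(q) = ∑ q^{(n+1/3)²+(n+1/3)(m+1/3)+(m+1/3)²}`. -/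
noncomputable def borC (q : ℂ) : ℂ :=
  ∑' p : ℤ × ℤ,
    q ^ ((((p.1 : ℂ) + 1 / 3) ^ 2 + ((p.1 : ℂ) + 1 / 3) * ((p.2 : ℂ) + 1 / 3) +
      ((p.2 : ℂ) + 1 / 3) ^ 2))


namespace BorAux

abbrev P := ℤ × ℤ
abbrev T := P × P × P

def QF (p : P) : ℤ := p.1 ^ 2 + p.1 * p.2 + p.2 ^ 2
def JF (p : P) : ℤ := QF p + p.1 + p.2
def tF (p : P) : ℤ := p.1 - p.2

def E (z : T) : ℤ := QF z.1 + QF z.2.1 + QF z.2.2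
def sg (z : T) : ℤ := tF z.1 + tF z.2.1 + tF z.2.2
def E' (w : T) : ℤ := JF w.1 + JF w.2.1 + JF w.2.2 + 1

/-- multiplication by ω on the Eisenstein lattice in coordinates -/
def rot (p : P) : P := (-p.1 - p.2, p.1)

def rotk : Fin 3 → P → P
  | 0 => id
  | 1 => rot
  | 2 => rot ∘ rot

/-- inverse rotation ω^{-k} -/
def unrotk : Fin 3 → P → P
  | 0 => id
  | 1 => rot ∘ rot
  | 2 => rot

def Vmap (z : T) : T :=
  (z.1 + z.2.1 + z.2.2,
   z.1 + rot z.2.1 + rot (rot z.2.2),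
   z.1 + rot (rot z.2.1) + rot z.2.2)

def Theta (k : Fin 3) (z : T) : T :=
  (rotk k (Vmap z).1, (Vmap z).2)

def psi (p : P) : P := (2 * p.1 + p.2 + 1, p.2 - p.1)
def psi3 (w : T) : T := (psi w.1, psi w.2.1, psi w.2.2)
def chi (p : P) : P := ((p.1 - p.2 - 1) / 3, (p.1 + 2 * p.2 - 1) / 3)
def chi3 (u : T) : T := (chi u.1, chi u.2.1, chi u.2.2)

def good (u : T) : Prop := tF u.1 % 3 = 1 ∧ tF u.2.1 % 3 = 1 ∧ tF u.2.2 % 3 = 1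

def invk (u : T) : Fin 3 := ⟨((u.1.2 + u.2.1.2 + u.2.2.2) % 3).toNat, by omega⟩

def invz (k : Fin 3) (u : T) : T :=
  (chi0 (unrotk k u.1 + u.2.1 + u.2.2),
   chi0 (unrotk k u.1 + rot (rot u.2.1) + rot u.2.2),
   chi0 (unrotk k u.1 + rot u.2.1 + rot (rot u.2.2)))
where chi0 (p : P) : P := (p.1 / 3, p.2 / 3)

lemma QF_rot (p : P) : QF (rot p) = QF p := by simp only [QF, rot]; ring

lemma E_Theta (k : Fin 3) (z : T) : E (Theta k z) = 3 * E z := by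
  obtain ⟨⟨a, b⟩, ⟨c, d⟩, e, f⟩ := z
  fin_cases k <;>
    simp only [Theta, Vmap, rotk, E, QF, rot, Function.comp, id, Prod.mk_add_mk] <;> ring

lemma good_Theta (k : Fin 3) (z : T) (h : sg z % 3 = 1) : good (Theta k z) := by
  obtain ⟨⟨a, b⟩, ⟨c, d⟩, e, f⟩ := z
  simp only [sg, tF] at h
  fin_cases k <;>
    simp only [Theta, Vmap, rotk, good, tF, rot, Function.comp, id, Prod.mk_add_mk] <;>
    refine ⟨by omega, by omega, by omega⟩

lemma psi3_good (w : T) : good (psi3 w) := by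
  obtain ⟨⟨a, b⟩, ⟨c, d⟩, e, f⟩ := w
  simp only [good, psi3, psi, tF]
  refine ⟨by omega, by omega, by omega⟩

lemma E_psi3 (w : T) : E (psi3 w) = 3 * E' w := by
  simp only [E, E', psi3, psi, QF, JF]; ring

lemma psi3_chi3 (u : T) (h : good u) : psi3 (chi3 u) = u := by
  obtain ⟨⟨a, b⟩, ⟨c, d⟩, e, f⟩ := u
  obtain ⟨h1, h2, h3⟩ := h
  simp only [tF] at h1 h2 h3
  simp only [psi3, chi3, psi, chi, Prod.mk.injEq]
  refine ⟨⟨by omega, by omega⟩, ⟨by omega, by omega⟩, by omega, by omega⟩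

lemma psi3_inj : Function.Injective psi3 := by
  intro ⟨⟨a, b⟩, ⟨c, d⟩, e, f⟩ ⟨⟨a', b'⟩, ⟨c', d'⟩, e', f'⟩ h
  simp only [psi3, psi, Prod.mk.injEq] at h
  obtain ⟨⟨h1, h2⟩, ⟨h3, h4⟩, h5, h6⟩ := h
  simp only [Prod.mk.injEq]
  refine ⟨⟨by omega, by omega⟩, ⟨by omega, by omega⟩, by omega, by omega⟩

lemma invT_Theta (k : Fin 3) (z : T) (h : sg z % 3 = 1) :
    invk (Theta k z) = k ∧ invz k (Theta k z) = z := by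
  obtain ⟨⟨a, b⟩, ⟨c, d⟩, e, f⟩ := z
  simp only [sg, tF] at h
  fin_cases k <;>
  · constructor
    · apply Fin.ext
      simp only [invk, Theta, Vmap, rotk, rot, Function.comp, id, Prod.mk_add_mk]
      omega
    · simp only [invz, invz.chi0, Theta, Vmap, rotk, unrotk, rot, Function.comp, id,
        Prod.mk_add_mk, Prod.mk.injEq]
      refine ⟨⟨by omega, by omega⟩, ⟨by omega, by omega⟩, by omega, by omega⟩

lemma Theta_invT (u : T) (h : good u) :
    Theta (invk u) (invz (invk u) u) = u ∧ sg (invz (invk u) u) % 3 = 1 := by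
  obtain ⟨⟨a, b⟩, ⟨c, d⟩, e, f⟩ := u
  obtain ⟨h1, h2, h3⟩ := h
  simp only [tF] at h1 h2 h3
  have hval : (invk ((a, b), (c, d), e, f)).val = ((b + d + f) % 3).toNat := rfl
  have h9 : ((b + d + f) % 3).toNat = 0 ∨ ((b + d + f) % 3).toNat = 1 ∨
      ((b + d + f) % 3).toNat = 2 := by omega
  rcases h9 with h9 | h9 | h9 <;>
  [ (have hk : invk ((a, b), (c, d), e, f) = (0 : Fin 3) := Fin.ext (by rw [hval, h9]; rfl));
    (have hk : invk ((a, b), (c, d), e, f) = (1 : Fin 3) := Fin.ext (by rw [hval, h9]; rfl));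
    (have hk : invk ((a, b), (c, d), e, f) = (2 : Fin 3) := Fin.ext (by rw [hval, h9]; rfl))] <;>
  · rw [hk]
    constructor
    · simp only [invz, invz.chi0, Theta, Vmap, rotk, unrotk, rot, Function.comp, id,
        Prod.mk_add_mk, Prod.mk.injEq]
      refine ⟨⟨by omega, by omega⟩, ⟨by omega, by omega⟩, by omega, by omega⟩
    · simp only [invz, invz.chi0, sg, tF, unrotk, rot, Function.comp, id, Prod.mk_add_mk]
      omega

open Complex

noncomputable def om : ℂ := Complex.exp (2 * Real.pi * Complex.I / 3)

lemma om_ne_zero : om ≠ 0 := Complex.exp_ne_zero _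

lemma om_cube : om ^ 3 = 1 := by
  rw [om, ← Complex.exp_nat_mul]
  have h : ((3 : ℕ) : ℂ) * (2 * Real.pi * Complex.I / 3) = 2 * Real.pi * Complex.I := by
    push_cast; ring
  rw [h]
  exact Complex.exp_two_pi_mul_I

lemma om_ne_one : om ≠ 1 := by
  intro h
  have h1 : om.im = Real.sin (2 * Real.pi / 3) := by
    rw [om, show (2 * Real.pi * Complex.I / 3) = ((2 * Real.pi / 3 : ℝ) : ℂ) * Complex.I by
      push_cast; ring]
    exact Complex.exp_ofReal_mul_I_im _
  have h2 : 0 < Real.sin (2 * Real.pi / 3) := by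
    apply Real.sin_pos_of_pos_of_lt_pi
    · positivity
    · nlinarith [Real.pi_pos]
  rw [h] at h1
  simp only [Complex.one_im] at h1
  linarith

lemma om_sum : 1 + om + om ^ 2 = 0 := by
  have h : (om - 1) * (om ^ 2 + om + 1) = 0 := by linear_combination om_cube
  rcases mul_eq_zero.mp h with h | h
  · exact absurd (sub_eq_zero.mp h) om_ne_one
  · linear_combination h

lemma om_norm : ‖om‖ = 1 := by
  rw [om, Complex.norm_exp]
  have : (2 * Real.pi * Complex.I / 3).re = 0 := by simp [Complex.div_re]
  rw [this, Real.exp_zero]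

lemma om_zpow_emod (n : ℤ) : om ^ n = om ^ (n % 3) := by
  conv_lhs => rw [show n = 3 * (n / 3) + n % 3 from (Int.mul_ediv_add_emod n 3).symm]
  rw [zpow_add₀ om_ne_zero, zpow_mul, show ((3:ℤ) = (3:ℕ)) from rfl, zpow_natCast, om_cube,
    one_zpow, one_mul]

/-- |n| ≤ n² over ℤ -/
lemma natAbs_le_sq (n : ℤ) : (n.natAbs : ℤ) ≤ n ^ 2 := by
  rcases eq_or_ne n 0 with h | h
  · simp [h]
  · have h1 : 1 ≤ (n.natAbs : ℤ) := by
      have := Int.natAbs_pos.mpr h; omega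
    have h2 : (n.natAbs : ℤ) * (n.natAbs : ℤ) = n * n := by
      exact_mod_cast Int.natAbs_mul_self
    nlinarith

set_option maxHeartbeats 1000000 in
lemma summable_majorant {s : ℝ} (h0 : 0 ≤ s) (h1 : s < 1) :
    Summable (fun p : ℤ × ℤ => s ^ p.1.natAbs * s ^ p.2.natAbs) := by
  have hg : Summable (fun n : ℕ => s ^ n) := summable_geometric_of_lt_one h0 h1
  have hs : Summable (fun n : ℤ => s ^ n.natAbs) := by
    apply Summable.of_nat_of_neg
    · exact hg.congr (by simp)
    · exact hg.congr (by simp)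
  exact hs.mul_of_nonneg hs (fun n => pow_nonneg h0 _) (fun n => pow_nonneg h0 _)

lemma key_summable {q : ℂ} (hq0 : q ≠ 0) (hq : ‖q‖ < 1) (L : ℤ × ℤ → ℤ)
    (hL0 : ∀ p, 0 ≤ L p)
    (hL : ∀ p : ℤ × ℤ, (p.1.natAbs : ℤ) + p.2.natAbs ≤ 2 * L p + 2) :
    Summable (fun p : ℤ × ℤ => ‖q ^ L p‖) := by
  set s : ℝ := Real.sqrt ‖q‖ with hs
  have hr0 : 0 < ‖q‖ := norm_pos_iff.mpr hq0
  have hs0 : 0 < s := Real.sqrt_pos.mpr hr0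
  have hss : s * s = ‖q‖ := Real.mul_self_sqrt (norm_nonneg q)
  have hs1 : s < 1 := by
    nlinarith
  have hmaj := (summable_majorant hs0.le hs1).mul_left ((s ^ 2)⁻¹)
  apply Summable.of_nonneg_of_le (fun p => norm_nonneg _) _ hmaj
  intro p
  have hnorm : ‖q ^ L p‖ = s ^ (2 * (L p).toNat) := by
    calc ‖q ^ L p‖ = ‖q‖ ^ (L p).toNat := by
          rw [norm_zpow, ← zpow_natCast ‖q‖, Int.toNat_of_nonneg (hL0 p)]
      _ = s ^ (2 * (L p).toNat) := by rw [pow_mul, sq, hss]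
  have hle : s ^ (2 * (L p).toNat + 2) ≤ s ^ (p.1.natAbs + p.2.natAbs) := by
    apply pow_le_pow_of_le_one hs0.le hs1.le
    have := hL p
    have := hL0 p
    omega
  rw [pow_add, pow_add] at hle
  rw [hnorm, le_inv_mul_iff₀ (by positivity : (0:ℝ) < s ^ 2)]
  calc s ^ 2 * s ^ (2 * (L p).toNat) = s ^ (2 * (L p).toNat) * s ^ 2 := by ring
    _ ≤ s ^ p.1.natAbs * s ^ p.2.natAbs := hle




variable {q : ℂ}

lemma QF_nonneg (p : P) : 0 ≤ QF p := by
  have := sq_nonneg (p.1 + p.2); have := sq_nonneg p.1; have := sq_nonneg p.2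
  simp only [QF]; nlinarith

lemma QF_bound (p : P) : (p.1.natAbs : ℤ) + p.2.natAbs ≤ 2 * QF p + 2 := by
  have h1 := natAbs_le_sq p.1
  have h2 := natAbs_le_sq p.2
  have h3 := sq_nonneg (p.1 + p.2)
  simp only [QF]; nlinarith

lemma QF_psi (p : P) : QF (psi p) = 3 * JF p + 1 := by
  simp only [QF, JF, psi]; ring

lemma JF_nonneg (p : P) : 0 ≤ JF p := by
  have h1 := QF_nonneg (psi p)
  rw [QF_psi] at h1
  omega

lemma JF_bound (p : P) : (p.1.natAbs : ℤ) + p.2.natAbs ≤ 2 * JF p + 2 := by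
  have h1 := natAbs_le_sq p.1
  have h2 := natAbs_le_sq p.2
  have h3 := sq_nonneg (p.1 + p.2 + 1)
  simp only [JF, QF]; nlinarith

lemma sg_neg (z : T) : sg (-z) = - sg z := by
  simp only [sg, tF, Prod.fst_neg, Prod.snd_neg]; ring

lemma E_neg (z : T) : E (-z) = E z := by
  simp only [E, QF, Prod.fst_neg, Prod.snd_neg]; ring

section Sums

variable (hq0 : q ≠ 0) (hq : ‖q‖ < 1)
include hq0 hq

lemma sumA : Summable (fun p : P => ‖q ^ QF p‖) :=
  key_summable hq0 hq QF QF_nonneg QF_bound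

lemma sumJ : Summable (fun p : P => ‖q ^ JF p‖) :=
  key_summable hq0 hq JF JF_nonneg JF_bound

lemma sumB : Summable (fun p : P => ‖om ^ tF p * q ^ QF p‖) := by
  refine (sumA hq0 hq).congr fun p => ?_
  simp only [norm_mul, norm_zpow, om_norm, one_zpow, one_mul]

lemma sumE : Summable (fun z : T => ‖q ^ E z‖) := by
  refine (((sumA hq0 hq).mul_norm (((sumA hq0 hq)).mul_norm (sumA hq0 hq)))).congr fun z => ?_
  rw [E, zpow_add₀ hq0, zpow_add₀ hq0, mul_assoc]

lemma sumE' : Summable (fun w : T => ‖q ^ E' w‖) := by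
  refine ((((sumJ hq0 hq).mul_norm (((sumJ hq0 hq)).mul_norm (sumJ hq0 hq)))).mul_left
    ‖q‖).congr fun w => ?_
  rw [E', zpow_add₀ hq0, zpow_add₀ hq0, zpow_add₀ hq0, zpow_one]
  simp only [norm_mul]
  ring

end Sums

noncomputable def Dfun (q : ℂ) (z : T) : ℂ := if sg z % 3 = 1 then q ^ E z else 0

end BorAux

namespace BorAux
open Complex

variable {q : ℂ}

noncomputable def D1f (q : ℂ) (z : T) : ℂ := if sg z % 3 = 1 then (1 - om) * q ^ E z else 0
noncomputable def D2f (q : ℂ) (z : T) : ℂ := if sg z % 3 = 2 then (1 - om ^ 2) * q ^ E z else 0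
noncomputable def D2f' (q : ℂ) (z : T) : ℂ := if sg z % 3 = 1 then (1 - om ^ 2) * q ^ E z else 0

section Sums2

variable (hq0 : q ≠ 0) (hq : ‖q‖ < 1)
include hq0 hq

omit hq0 hq in
lemma norm_om_bound : ∀ c : ℂ, c = 1 - om ∨ c = 1 - om ^ 2 ∨ c = 3 → ‖c‖ ≤ 3 := by
  rintro c (rfl | rfl | rfl)
  · calc ‖1 - om‖ ≤ ‖(1:ℂ)‖ + ‖om‖ := norm_sub_le _ _
      _ ≤ 3 := by rw [om_norm, norm_one]; norm_num
  · calc ‖1 - om ^ 2‖ ≤ ‖(1:ℂ)‖ + ‖om ^ 2‖ := norm_sub_le _ _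
      _ ≤ 3 := by rw [norm_pow, om_norm, norm_one]; norm_num
  · simp only [Complex.norm_ofNat]; norm_num

lemma sum_ite_gen (c : ℂ) (hc : ‖c‖ ≤ 3) (r : ℤ) :
    Summable (fun z : T => ‖(if sg z % 3 = r then c * q ^ E z else 0 : ℂ)‖) := by
  refine Summable.of_nonneg_of_le (fun z => norm_nonneg _) ?_ ((sumE hq0 hq).mul_left 3)
  intro z
  by_cases h : sg z % 3 = r
  · rw [if_pos h, norm_mul]
    exact mul_le_mul_of_nonneg_right hc (norm_nonneg _)
  · rw [if_neg h, norm_zero]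
    positivity

lemma sumD1 : Summable (fun z => D1f q z) :=
  ((sum_ite_gen hq0 hq _ (norm_om_bound _ (Or.inl rfl)) 1).of_norm).congr fun z => rfl

lemma sumD2 : Summable (fun z => D2f q z) :=
  ((sum_ite_gen hq0 hq _ (norm_om_bound _ (Or.inr (Or.inl rfl))) 2).of_norm).congr
    fun z => rfl

lemma sumD2' : Summable (fun z => D2f' q z) :=
  ((sum_ite_gen hq0 hq _ (norm_om_bound _ (Or.inr (Or.inl rfl))) 1).of_norm).congr
    fun z => rfl

lemma sumDnorm : Summable (fun z : T => ‖Dfun q z‖) := by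
  refine (sum_ite_gen hq0 hq 1 (by rw [norm_one]; norm_num) 1).congr fun z => ?_
  simp only [Dfun, one_mul]

lemma sumD : Summable (fun z => Dfun q z) := (sumDnorm hq0 hq).of_norm

/-- `a(q)³` as a sextuple sum -/
lemma cubeA : borA q ^ 3 = ∑' z : T, q ^ E z := by
  have hre : borA q = ∑' p : P, q ^ QF p := rfl
  have h1 : borA q * borA q = ∑' y : P × P, q ^ QF y.1 * q ^ QF y.2 := by
    rw [hre]; exact tsum_mul_tsum_of_summable_norm (sumA hq0 hq) (sumA hq0 hq)
  have h2 : borA q ^ 3 = borA q * (borA q * borA q) := by ring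
  rw [h2, h1, hre,
    tsum_mul_tsum_of_summable_norm (sumA hq0 hq) ((sumA hq0 hq).mul_norm (sumA hq0 hq))]
  refine tsum_congr fun z => ?_
  rw [E, zpow_add₀ hq0, zpow_add₀ hq0, mul_assoc]

/-- `b(q)³` as a sextuple sum -/
lemma cubeB : borB q ^ 3 = ∑' z : T, om ^ sg z * q ^ E z := by
  have hre : borB q = ∑' p : P, om ^ tF p * q ^ QF p := rfl
  have h1 : borB q * borB q
      = ∑' y : P × P, (om ^ tF y.1 * q ^ QF y.1) * (om ^ tF y.2 * q ^ QF y.2) := by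
    rw [hre]; exact tsum_mul_tsum_of_summable_norm (sumB hq0 hq) (sumB hq0 hq)
  have h2 : borB q ^ 3 = borB q * (borB q * borB q) := by ring
  rw [h2, h1, hre,
    tsum_mul_tsum_of_summable_norm (sumB hq0 hq) ((sumB hq0 hq).mul_norm (sumB hq0 hq))]
  refine tsum_congr fun z => ?_
  rw [E, sg, zpow_add₀ hq0, zpow_add₀ hq0, zpow_add₀ om_ne_zero, zpow_add₀ om_ne_zero]
  ring

/-- `c(q)` with the cube root pulled out -/
lemma cExtract : borC q = q ^ ((1 : ℂ)/3) * ∑' p : P, q ^ JF p := by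
  rw [borC, ← tsum_mul_left]
  refine tsum_congr fun p => ?_
  have hx : (((p.1 : ℂ) + 1/3) ^ 2 + ((p.1 : ℂ) + 1/3) * ((p.2 : ℂ) + 1/3) +
      ((p.2 : ℂ) + 1/3) ^ 2) = (1 : ℂ)/3 + ((JF p : ℤ) : ℂ) := by
    push_cast [JF, QF]; ring
  rw [hx, cpow_add _ _ hq0, Complex.cpow_intCast]

/-- `c(q)³` as a sextuple sum -/
lemma cubeC : borC q ^ 3 = ∑' w : T, q ^ E' w := by
  have hcc : Summable (fun p : P => q ^ JF p) := (sumJ hq0 hq).of_norm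
  have h13 : (q ^ ((1 : ℂ)/3)) ^ 3 = q := by
    have h : (q ^ ((1 : ℂ)/3)) ^ 3 = q ^ ((1 : ℂ)/3) * (q ^ ((1 : ℂ)/3) * q ^ ((1 : ℂ)/3)) := by
      ring
    rw [h, ← cpow_add _ _ hq0, ← cpow_add _ _ hq0]
    norm_num
  have h1 : (∑' p : P, q ^ JF p) * (∑' p : P, q ^ JF p)
      = ∑' y : P × P, q ^ JF y.1 * q ^ JF y.2 :=
    tsum_mul_tsum_of_summable_norm (sumJ hq0 hq) (sumJ hq0 hq)
  rw [cExtract hq0 hq, mul_pow, h13]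
  have h2 : (∑' p : P, q ^ JF p) ^ 3
      = (∑' p : P, q ^ JF p) * ((∑' p : P, q ^ JF p) * (∑' p : P, q ^ JF p)) := by ring
  rw [h2, h1,
    tsum_mul_tsum_of_summable_norm (sumJ hq0 hq) ((sumJ hq0 hq).mul_norm (sumJ hq0 hq)),
    ← tsum_mul_left]
  refine tsum_congr fun w => ?_
  rw [E', zpow_add₀ hq0, zpow_add₀ hq0, zpow_add₀ hq0, zpow_one]
  ring

/-- the difference as a single sum -/
lemma subAB : borA q ^ 3 - borB q ^ 3 = ∑' z : T, (1 - om ^ sg z) * q ^ E z := by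
  rw [cubeA hq0 hq, cubeB hq0 hq,
    ← Summable.tsum_sub ((sumE hq0 hq).of_norm) (((sumB hq0 hq).mul_norm
      ((sumB hq0 hq).mul_norm (sumB hq0 hq))).of_norm.congr (fun z => by
        rw [E, sg, zpow_add₀ hq0, zpow_add₀ hq0, zpow_add₀ om_ne_zero, zpow_add₀ om_ne_zero]
        ring))]
  exact tsum_congr fun z => by ring

omit hq0 hq in
lemma split_pointwise (z : T) : (1 - om ^ sg z) * q ^ E z = D1f q z + D2f q z := by
  have h3 : om ^ sg z = om ^ (sg z % 3) := om_zpow_emod _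
  have hc : sg z % 3 = 0 ∨ sg z % 3 = 1 ∨ sg z % 3 = 2 := by omega
  rcases hc with hc | hc | hc
  · rw [D1f, D2f, if_neg (by omega), if_neg (by omega), h3, hc]
    simp
  · rw [D1f, D2f, if_pos hc, if_neg (by omega), h3, hc]
    simp [zpow_one]
  · rw [D1f, D2f, if_neg (by omega), if_pos hc, h3, hc]
    norm_num [zpow_ofNat]

omit hq0 hq in
lemma D2_reindex : ∑' z : T, D2f q z = ∑' z : T, D2f' q z := by
  calc ∑' z : T, D2f q z = ∑' z : T, D2f q (Equiv.neg T z) := (Equiv.tsum_eq (Equiv.neg T) _).symm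
    _ = ∑' z : T, D2f' q z := by
        refine tsum_congr fun z => ?_
        have h1 : Equiv.neg T z = -z := rfl
        have h2 : (-(sg z)) % 3 = 2 ↔ sg z % 3 = 1 := by omega
        rw [D2f, D2f', h1, sg_neg, E_neg]
        by_cases h : sg z % 3 = 1
        · rw [if_pos (h2.mpr h), if_pos h]
        · rw [if_neg (fun hh => h (h2.mp hh)), if_neg h]

/-- main difference formula: `a³ - b³ = 3 ∑_{σ≡1} q^E` -/
lemma subAB3 : borA q ^ 3 - borB q ^ 3 = 3 * ∑' z : T, Dfun q z := by
  rw [subAB hq0 hq]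
  calc ∑' z : T, (1 - om ^ sg z) * q ^ E z = ∑' z : T, (D1f q z + D2f q z) :=
        tsum_congr (split_pointwise)
    _ = (∑' z : T, D1f q z) + ∑' z : T, D2f q z := Summable.tsum_add (sumD1 hq0 hq) (sumD2 hq0 hq)
    _ = (∑' z : T, D1f q z) + ∑' z : T, D2f' q z := by rw [D2_reindex]
    _ = ∑' z : T, (D1f q z + D2f' q z) := (Summable.tsum_add (sumD1 hq0 hq) (sumD2' hq0 hq)).symm
    _ = ∑' z : T, 3 * Dfun q z := by
        refine tsum_congr fun z => ?_
        rw [D1f, D2f', Dfun]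
        by_cases h : sg z % 3 = 1
        · rw [if_pos h, if_pos h, if_pos h]
          linear_combination (-(q ^ E z)) * om_sum
        · rw [if_neg h, if_neg h, if_neg h]; ring
    _ = 3 * ∑' z : T, Dfun q z := tsum_mul_left

end Sums2

end BorAux

namespace BorAux
open Complex

variable {q : ℂ}

section Final

variable (hq0 : q ≠ 0) (hq : ‖q‖ < 1)
include hq0 hq

/-- the 3-to-1 lattice bijection: `∑_{k, z} D z = ∑_w q^{E' w}` -/
lemma bijection_step :
    ∑' x : Fin 3 × T, Dfun q x.2 = ∑' w : T, q ^ E' w := by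
  refine tsum_eq_tsum_of_ne_zero_bij
    (i := fun w => (invk (psi3 ↑w), invz (invk (psi3 ↑w)) (psi3 ↑w))) ?_ ?_ ?_
  · -- injectivity
    intro w w' h
    have hk := congrArg Prod.fst h
    have hz := congrArg Prod.snd h
    simp only at hk hz
    have h1 : psi3 (↑w : T) = psi3 ↑w' := by
      have e1 := (Theta_invT (psi3 ↑w) (psi3_good _)).1
      have e2 := (Theta_invT (psi3 ↑w') (psi3_good _)).1
      rw [← e1, ← e2, hz, hk]
    exact Subtype.ext (psi3_inj h1)
  · -- support condition
    intro x hx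
    have hσ : sg x.2 % 3 = 1 := by
      by_contra h
      exact hx (by simp [Dfun, h])
    set u : T := Theta x.1 x.2 with hu
    have hgood : good u := good_Theta x.1 x.2 hσ
    have hw : psi3 (chi3 u) = u := psi3_chi3 u hgood
    have hmem : chi3 u ∈ Function.support (fun w : T => q ^ E' w) := by
      simp only [Function.support, Set.mem_setOf_eq]
      exact zpow_ne_zero _ hq0
    refine ⟨⟨chi3 u, hmem⟩, ?_⟩
    have hinv := invT_Theta x.1 x.2 hσ
    show (invk (psi3 (chi3 u)), invz (invk (psi3 (chi3 u))) (psi3 (chi3 u))) = x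
    rw [hw, hu, hinv.1, hinv.2]
  · -- value condition
    intro w
    have hgood : good (psi3 ↑w) := psi3_good _
    have hTH := Theta_invT (psi3 ↑w) hgood
    show Dfun q (invz (invk (psi3 ↑w)) (psi3 ↑w)) = q ^ E' ↑w
    rw [Dfun, if_pos hTH.2]
    congr 1
    have hE : 3 * E (invz (invk (psi3 ↑w)) (psi3 ↑w)) = 3 * E' ↑w := by
      rw [← E_Theta (invk (psi3 ↑w)) (invz (invk (psi3 ↑w)) (psi3 ↑w)), hTH.1, E_psi3]
    omega

lemma prod_step : ∑' x : Fin 3 × T, Dfun q x.2 = 3 * ∑' z : T, Dfun q z := by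
  have hnorm : Summable (fun x : Fin 3 × T => ‖Dfun q x.2‖) := by
    refine (summable_prod_of_nonneg (fun x => norm_nonneg _)).2 ⟨fun k => sumDnorm hq0 hq, ?_⟩
    exact Summable.of_finite
  rw [Summable.tsum_prod' hnorm.of_norm (fun k => (sumD hq0 hq))]
  rw [tsum_fintype]
  simp only [Finset.sum_const, Finset.card_univ, Fintype.card_fin, nsmul_eq_mul]
  norm_num

/-- the main identity for `q ≠ 0` -/
lemma main_ne_zero : borA q ^ 3 = borB q ^ 3 + borC q ^ 3 := by
  have h1 : borA q ^ 3 - borB q ^ 3 = borC q ^ 3 := by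
    rw [subAB3 hq0 hq, cubeC hq0 hq, ← bijection_step hq0 hq, prod_step hq0 hq]
  linear_combination h1

end Final

end BorAux

namespace BorAux
open Complex

lemma QF_eq_zero {p : P} (h : QF p = 0) : p = (0, 0) := by
  have h2 : p.1 ^ 2 + p.2 ^ 2 + (p.1 + p.2) ^ 2 = 0 := by
    simp only [QF] at h; linear_combination 2 * h
  have h3 : p.1 ^ 2 = 0 := by nlinarith [sq_nonneg p.1, sq_nonneg p.2, sq_nonneg (p.1 + p.2)]
  have h4 : p.2 ^ 2 = 0 := by nlinarith [sq_nonneg p.1, sq_nonneg p.2, sq_nonneg (p.1 + p.2)]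
  have h5 : p.1 = 0 := by nlinarith
  have h6 : p.2 = 0 := by nlinarith
  exact Prod.ext h5 h6

lemma borA_zero : borA 0 = 1 := by
  rw [borA]
  rw [tsum_eq_single ((0, 0) : P)]
  · norm_num
  · intro p hp
    have hQ : QF p ≠ 0 := fun h => hp (QF_eq_zero h)
    exact zero_zpow _ hQ

lemma borB_zero : borB 0 = 1 := by
  rw [borB]
  rw [tsum_eq_single ((0, 0) : P)]
  · norm_num
  · intro p hp
    have hQ : QF p ≠ 0 := fun h => hp (QF_eq_zero h)
    rw [show (p.1 ^ 2 + p.1 * p.2 + p.2 ^ 2) = QF p from rfl, zero_zpow _ hQ, mul_zero]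

lemma borC_zero : borC 0 = 0 := by
  rw [borC]
  have key : ∀ p : P, ((0 : ℂ)) ^ ((((p.1 : ℂ) + 1/3) ^ 2 +
      ((p.1 : ℂ) + 1/3) * ((p.2 : ℂ) + 1/3) + ((p.2 : ℂ) + 1/3) ^ 2)) = 0 := by
    intro p
    have hx : (((p.1 : ℂ) + 1/3) ^ 2 + ((p.1 : ℂ) + 1/3) * ((p.2 : ℂ) + 1/3) +
        ((p.2 : ℂ) + 1/3) ^ 2) = ((3 * JF p + 1 : ℤ) : ℂ) / 3 := by
      push_cast [JF, QF]; ring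
    have hne : (((3 * JF p + 1 : ℤ) : ℂ)) ≠ 0 :=
      Int.cast_ne_zero.mpr (by omega)
    rw [hx, zero_cpow (div_ne_zero hne (by norm_num))]
  calc _ = ∑' (_ : P), (0 : ℂ) := tsum_congr key
    _ = 0 := tsum_zero

end BorAux

/-- Borwein's identity `a(q)³ = b(q)³ + c(q)³`. -/
theorem stmt10 (q : ℂ) (hq : ‖q‖ < 1) :
    borA q ^ 3 = borB q ^ 3 + borC q ^ 3 := by
  rcases eq_or_ne q 0 with rfl | hq0
  · rw [BorAux.borA_zero, BorAux.borB_zero, BorAux.borC_zero]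
    norm_num
  · exact BorAux.main_ne_zero hq0 hq
end
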